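/- Let 𝔥 be a hyperplane of a CAT(0) cube complex 𝒞 splitting its underlying median graph G into halfspaces H and H', with H minimal under inclusion among all halfspaces. Then the gate map p' : G → H' restricts to an isomorphism from H onto p'(H), and G is isomorphic to (G \ H) ∪ (p'(H) × {0,1}); moreover p'(H) is a convex subgraph (a cuboid) of G \ H. -/

import Mathlib

/-- The metric interval between two vertices of a graph (with the path metric). -/
def gInterval {V : Type} (G : SimpleGraph V) (x y : V) : Set V :=
  {w | G.dist x w + G.dist w y = G.dist x y}

/-- A vertex set is convex if it contains all metric intervals between its points. -/
def GConvex {V : Type} (G : SimpleGraph V) (H : Set V) : Prop :=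
  ∀ x ∈ H, ∀ y ∈ H, gInterval G x y ⊆ H

/-- A graph is median if it is connected and every triple of vertices has a unique
median, i.e. a unique vertex lying in all three pairwise metric intervals. -/
def IsMedianGraph {V : Type} (G : SimpleGraph V) : Prop :=
  G.Connected ∧ ∀ x y z : V,
    ∃! w, w ∈ gInterval G x y ∧ w ∈ gInterval G y z ∧ w ∈ gInterval G x z

/-- `x₀` is a gate of `x` in the vertex set `H`. -/
def IsGraphGate {V : Type} (G : SimpleGraph V) (H : Set V) (x x₀ : V) : Prop :=
  x₀ ∈ H ∧ ∀ a ∈ H, G.dist x a = G.dist x x₀ + G.dist x₀ a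

/-- A vertex set is a halfspace if it and its complement are nonempty and convex;
in a CAT(0) cube complex these are exactly the sides of hyperplanes. -/
def IsHalfspace {V : Type} (G : SimpleGraph V) (H : Set V) : Prop :=
  H.Nonempty ∧ Hᶜ.Nonempty ∧ GConvex G H ∧ GConvex G Hᶜ

/-- The graph `(G \ H) ∪ (P × {0,1})`: the subgraph induced on `Hᶜ` together with a
second copy of `P ⊆ Hᶜ`, each new vertex matched by an edge to its base vertex. -/
def doubledGraph {V : Type} (G : SimpleGraph V) (H P : Set V) :
    SimpleGraph (↥Hᶜ ⊕ ↥P) :=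
  SimpleGraph.fromRel (fun a b =>
    match a, b with
    | .inl a, .inl b => G.Adj ↑a ↑b
    | .inl a, .inr b => (a : V) = ↑b
    | .inr _, .inl _ => False
    | .inr a, .inr b => G.Adj ↑a ↑b)

section Aux
variable {V : Type} {G : SimpleGraph V}

lemma dcomm (G : SimpleGraph V) (a b : V) : G.dist a b = G.dist b a :=
  SimpleGraph.dist_comm

lemma mem_gInterval {x y w : V} :
    w ∈ gInterval G x y ↔ G.dist x w + G.dist w y = G.dist x y := Iff.rfl

lemma gInterval_symm {x y w : V} (h : w ∈ gInterval G x y) : w ∈ gInterval G y x := by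
  rw [mem_gInterval] at h ⊢
  rw [dcomm G y w, dcomm G w x, dcomm G y x]
  omega

lemma sub_interval_left (hc : G.Connected) {a b c : V} (hb : b ∈ gInterval G a c) :
    gInterval G a b ⊆ gInterval G a c := by
  intro w hw
  rw [mem_gInterval] at *
  have t1 : G.dist a c ≤ G.dist a w + G.dist w c := hc.dist_triangle
  have t2 : G.dist w c ≤ G.dist w b + G.dist b c := hc.dist_triangle
  omega

lemma sub_interval_right (hc : G.Connected) {a b c : V} (hb : b ∈ gInterval G a c) :
    gInterval G b c ⊆ gInterval G a c := by
  intro w hw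
  rw [mem_gInterval] at *
  have t1 : G.dist a c ≤ G.dist a w + G.dist w c := hc.dist_triangle
  have t2 : G.dist a w ≤ G.dist a b + G.dist b w := hc.dist_triangle
  omega

lemma no_tie (hc : G.Connected)
    (hmed : ∀ x y z : V, ∃! w, w ∈ gInterval G x y ∧ w ∈ gInterval G y z ∧ w ∈ gInterval G x z)
    {u v : V} (huv : G.Adj u v) (w : V) : G.dist w u ≠ G.dist w v := by
  intro he
  obtain ⟨m, ⟨h1, h2, h3⟩, -⟩ := hmed u v w
  rw [mem_gInterval] at h1 h2 h3
  have huv1 : G.dist u v = 1 := SimpleGraph.dist_eq_one_iff_adj.mpr huv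
  have hwu : G.dist w u = G.dist u w := dcomm G ..
  have hwv : G.dist w v = G.dist v w := dcomm G ..
  rcases Nat.eq_zero_or_pos (G.dist u m) with h0 | hpos
  · have hmu : m = u := (hc.dist_eq_zero_iff).mp (by rw [dcomm G m u]; exact h0)
    rw [hmu] at h2
    rw [dcomm G v u] at h2
    omega
  · have h0' : G.dist m v = 0 := by omega
    have hmv : m = v := (hc.dist_eq_zero_iff).mp h0'
    rw [hmv] at h3
    omega

lemma adj_dichotomy (hc : G.Connected)
    (hmed : ∀ x y z : V, ∃! w, w ∈ gInterval G x y ∧ w ∈ gInterval G y z ∧ w ∈ gInterval G x z)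
    {u v : V} (huv : G.Adj u v) (w : V) :
    G.dist w v = G.dist w u + 1 ∨ G.dist w u = G.dist w v + 1 := by
  have huv1 : G.dist u v = 1 := SimpleGraph.dist_eq_one_iff_adj.mpr huv
  have hvu1 : G.dist v u = 1 := by rw [dcomm G]; exact huv1
  have t1 : G.dist w v ≤ G.dist w u + 1 := by
    have := hc.dist_triangle (u := w) (v := u) (w := v); omega
  have t2 : G.dist w u ≤ G.dist w v + 1 := by
    have := hc.dist_triangle (u := w) (v := v) (w := u); omega
  have := no_tie hc hmed huv w
  omega

/-- If `z` is on the `v`-side and `w ∈ I(z,v)` then `w` is on the `v`-side,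
and `w ∈ I(z,u)`. -/
lemma into_v_side (hc : G.Connected) {u v z w : V} (huv : G.Adj u v)
    (hz : G.dist z u = G.dist z v + 1) (hw : w ∈ gInterval G z v) :
    G.dist w u = G.dist w v + 1 ∧ w ∈ gInterval G z u := by
  rw [mem_gInterval] at hw
  have huv1 : G.dist u v = 1 := SimpleGraph.dist_eq_one_iff_adj.mpr huv
  have t1 : G.dist z u ≤ G.dist z w + G.dist w u := hc.dist_triangle
  have t2 : G.dist w u ≤ G.dist w v + 1 := by
    have := hc.dist_triangle (u := w) (v := v) (w := u)
    rw [dcomm G v u] at this; omega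
  rw [mem_gInterval]
  omega

lemma W_convex (hc : G.Connected)
    (hmed : ∀ x y z : V, ∃! w, w ∈ gInterval G x y ∧ w ∈ gInterval G y z ∧ w ∈ gInterval G x z)
    {u v : V} (huv : G.Adj u v) :
    GConvex G {w | G.dist w u < G.dist w v} := by
  intro x hx y hy z0 hz0
  simp only [Set.mem_setOf_eq] at hx hy ⊢
  by_contra hz
  have hxd : G.dist x v = G.dist x u + 1 := by
    rcases adj_dichotomy hc hmed huv x with h | h
    · omega
    · omega
  have hyd : G.dist y v = G.dist y u + 1 := by
    rcases adj_dichotomy hc hmed huv y with h | h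
    · omega
    · omega
  have hz0d : G.dist z0 u = G.dist z0 v + 1 := by
    rcases adj_dichotomy hc hmed huv z0 with h | h
    · omega
    · omega
  -- z1 = median of x z0 v
  obtain ⟨z1, ⟨hz1a, hz1b, hz1c⟩, -⟩ := hmed x z0 v
  have hz1xy : z1 ∈ gInterval G x y := sub_interval_left hc hz0 hz1a
  obtain ⟨hz1d, -⟩ := into_v_side hc huv hz0d hz1b
  -- z2 = median of y z1 v
  obtain ⟨z2, ⟨hz2a, hz2b, hz2c⟩, -⟩ := hmed y z1 v
  have hz2xy : z2 ∈ gInterval G x y :=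
    sub_interval_right hc hz1xy (gInterval_symm hz2a)
  obtain ⟨hz2d, -⟩ := into_v_side hc huv hz1d hz2b
  have hz2xv : z2 ∈ gInterval G x v := sub_interval_right hc hz1c hz2b
  -- t = median of x y u
  obtain ⟨t, ⟨hta, htb, htc⟩, -⟩ := hmed x y u
  have hxd' : G.dist x u = G.dist x v + 1 → False := by omega
  obtain ⟨htd, htxv⟩ := into_v_side hc huv.symm hxd htc
  obtain ⟨-, htyv⟩ := into_v_side hc huv.symm hyd htb
  -- both t and z2 are medians of (x, y, v)
  obtain ⟨m, -, hmu⟩ := hmed x y v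
  have h1 : t = m := hmu t ⟨hta, htyv, htxv⟩
  have h2 : z2 = m := hmu z2 ⟨hz2xy, hz2c, hz2xv⟩
  rw [h1.trans h2.symm] at htd
  omega

lemma W_halfspace (hc : G.Connected)
    (hmed : ∀ x y z : V, ∃! w, w ∈ gInterval G x y ∧ w ∈ gInterval G y z ∧ w ∈ gInterval G x z)
    {u v : V} (huv : G.Adj u v) :
    IsHalfspace G {w | G.dist w u < G.dist w v} := by
  refine ⟨⟨u, ?_⟩, ⟨v, ?_⟩, W_convex hc hmed huv, ?_⟩
  · simp only [Set.mem_setOf_eq, SimpleGraph.dist_self]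
    have : G.dist u v = 1 := SimpleGraph.dist_eq_one_iff_adj.mpr huv
    omega
  · simp only [Set.mem_compl_iff, Set.mem_setOf_eq, SimpleGraph.dist_self]
    omega
  · have hset : {w | G.dist w u < G.dist w v}ᶜ = {w | G.dist w v < G.dist w u} := by
      ext w
      have := no_tie hc hmed huv w
      simp only [Set.mem_compl_iff, Set.mem_setOf_eq]
      omega
    rw [hset]
    exact W_convex hc hmed huv.symm

end Aux

section Gate
variable {V : Type} {G : SimpleGraph V} {H : Set V} {p' : V → V}

lemma gate_dist_one (hc : G.Connected)
    (hmed : ∀ x y z : V, ∃! w, w ∈ gInterval G x y ∧ w ∈ gInterval G y z ∧ w ∈ gInterval G x z)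
    (hmin : ∀ K : Set V, IsHalfspace G K → K ⊆ H → K = H)
    (hp' : ∀ x, IsGraphGate G Hᶜ x (p' x)) {x : V} (hx : x ∈ H) :
    G.dist x (p' x) = 1 := by
  have hpc : p' x ∈ Hᶜ := (hp' x).1
  have hpg := (hp' x).2
  have hk1 : 1 ≤ G.dist x (p' x) := by
    rcases Nat.eq_zero_or_pos (G.dist x (p' x)) with h0 | h
    · exact absurd ((hc.dist_eq_zero_iff).mp h0 ▸ hx) hpc
    · omega
  by_contra hne1
  have hk2 : 2 ≤ G.dist x (p' x) := by omega
  obtain ⟨y, hyc, hyg, hy2⟩ : ∃ y, y ∈ Hᶜ ∧ (∀ a ∈ Hᶜ, G.dist x a = G.dist x y + G.dist y a) ∧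
      2 ≤ G.dist x y := ⟨p' x, hpc, hpg, hk2⟩
  clear hk2 hne1 hk1 hpg hpc
  obtain ⟨p, hp⟩ := hc.exists_walk_length_eq_dist x y
  cases p with
  | nil => rw [SimpleGraph.Walk.length_nil] at hp; omega
  | cons hxb q =>
    rename_i b
    rw [SimpleGraph.Walk.length_cons] at hp
    have hq : G.dist b y ≤ q.length := SimpleGraph.dist_le q
    have hxb1 : G.dist x b = 1 := SimpleGraph.dist_eq_one_iff_adj.mpr hxb
    have hbH : b ∈ H := by
      by_contra hb
      have := hyg b hb
      omega
    have hKH : {w | G.dist w x < G.dist w b} ⊆ H := by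
      intro w hw
      by_contra hwH
      have hg := hyg w hwH
      have t : G.dist w b ≤ G.dist w y + G.dist y b := hc.dist_triangle
      have c1 := dcomm G w x
      have c2 := dcomm G w y
      have c3 := dcomm G b y
      simp only [Set.mem_setOf_eq] at hw
      omega
    have hK := hmin _ (W_halfspace hc hmed hxb) hKH
    rw [← hK] at hbH
    simp only [Set.mem_setOf_eq, SimpleGraph.dist_self] at hbH
    omega

lemma gate_edge (hc : G.Connected) (hp' : ∀ x, IsGraphGate G Hᶜ x (p' x))
    {x y : V} (hx : x ∈ H) (hy : y ∈ Hᶜ) (hxy : G.Adj x y) : y = p' x := by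
  have hg := (hp' x).2 y hy
  have h1 : G.dist x y = 1 := SimpleGraph.dist_eq_one_iff_adj.mpr hxy
  have hpos : 1 ≤ G.dist x (p' x) := by
    rcases Nat.eq_zero_or_pos (G.dist x (p' x)) with h0 | h
    · exact absurd ((hc.dist_eq_zero_iff).mp h0 ▸ hx) (hp' x).1
    · omega
  have h0 : G.dist (p' x) y = 0 := by omega
  exact ((hc.dist_eq_zero_iff).mp h0).symm

lemma dist_pres (hc : G.Connected)
    (hmed : ∀ x y z : V, ∃! w, w ∈ gInterval G x y ∧ w ∈ gInterval G y z ∧ w ∈ gInterval G x z)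
    (hH : IsHalfspace G H)
    (hmin : ∀ K : Set V, IsHalfspace G K → K ⊆ H → K = H)
    (hp' : ∀ x, IsGraphGate G Hᶜ x (p' x)) {x y : V} (hx : x ∈ H) (hy : y ∈ H) :
    G.dist x y = G.dist (p' x) (p' y) := by
  have e1 : G.dist y (p' x) = G.dist y (p' y) + G.dist (p' y) (p' x) :=
    (hp' y).2 (p' x) (hp' x).1
  have e2 : G.dist y (p' y) = 1 := gate_dist_one hc hmed hmin hp' hy
  have e3 : G.dist x (p' x) = 1 := gate_dist_one hc hmed hmin hp' hx
  obtain ⟨m, ⟨h1, h2, h3⟩, -⟩ := hmed y x (p' x)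
  have hmH : m ∈ H := hH.2.2.1 y hy x hx h1
  rw [mem_gInterval] at h1 h2 h3
  rcases Nat.eq_zero_or_pos (G.dist x m) with h0 | hpos
  · have hmx : x = m := (hc.dist_eq_zero_iff).mp h0
    rw [← hmx] at h3
    have c1 := dcomm G x y
    have c2 := dcomm G (p' x) (p' y)
    omega
  · have h0' : G.dist m (p' x) = 0 := by omega
    have : m = p' x := (hc.dist_eq_zero_iff).mp h0'
    rw [this] at hmH
    exact absurd hmH (hp' x).1

lemma image_interval (hc : G.Connected)
    (hmed : ∀ x y z : V, ∃! w, w ∈ gInterval G x y ∧ w ∈ gInterval G y z ∧ w ∈ gInterval G x z)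
    (hH : IsHalfspace G H)
    (hmin : ∀ K : Set V, IsHalfspace G K → K ⊆ H → K = H)
    (hp' : ∀ x, IsGraphGate G Hᶜ x (p' x)) {a b w : V} (ha : a ∈ H) (hb : b ∈ H)
    (hw : w ∈ Hᶜ) (hwI : w ∈ gInterval G (p' a) (p' b)) : w ∈ p' '' H := by
  obtain ⟨m, ⟨h1, h2, h3⟩, -⟩ := hmed a b w
  have hmH : m ∈ H := hH.2.2.1 a ha b hb h1
  rw [mem_gInterval] at h1 h2 h3 hwI
  have ga := (hp' a).2 w hw
  have gb := (hp' b).2 w hw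
  have e3 : G.dist a (p' a) = 1 := gate_dist_one hc hmed hmin hp' ha
  have e4 : G.dist b (p' b) = 1 := gate_dist_one hc hmed hmin hp' hb
  have dp : G.dist a b = G.dist (p' a) (p' b) := dist_pres hc hmed hH hmin hp' ha hb
  have c1 := dcomm G w (p' b)
  have c2 := dcomm G m b
  have c3 := dcomm G (p' a) w
  have c4 := dcomm G (p' b) w
  have hm1 : G.dist m w = 1 := by omega
  have : w = p' m := gate_edge hc hp' hmH hw (SimpleGraph.dist_eq_one_iff_adj.mp hm1)
  exact ⟨m, hmH, this.symm⟩

end Gate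

section Induce
variable {V : Type} {G : SimpleGraph V}

lemma walk_induce {s : Set V} :
    ∀ {u v : V} (p : G.Walk u v) (hs : ∀ w ∈ p.support, w ∈ s),
      ∃ q : (G.induce s).Walk ⟨u, hs u p.start_mem_support⟩ ⟨v, hs v p.end_mem_support⟩,
        q.length = p.length := by
  intro u v p
  induction p with
  | nil => exact fun hs => ⟨SimpleGraph.Walk.nil, rfl⟩
  | cons h p ih =>
    rename_i a b c
    intro hs
    obtain ⟨q, hq⟩ :=
      ih (fun w hw => hs w (by rw [SimpleGraph.Walk.support_cons]; exact List.mem_cons_of_mem _ hw))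
    refine ⟨SimpleGraph.Walk.cons ?_ q, ?_⟩
    · exact h
    · exact congrArg (· + 1) hq

lemma support_subset_interval (hc : G.Connected) {x y : V} (p : G.Walk x y)
    (hlen : p.length = G.dist x y) {w : V} (hw : w ∈ p.support) : w ∈ gInterval G x y := by
  haveI := Classical.decEq V
  have h1 : G.dist x w ≤ (p.takeUntil w hw).length := SimpleGraph.dist_le _
  have h2 : G.dist w y ≤ (p.dropUntil w hw).length := SimpleGraph.dist_le _
  have h3 : (p.takeUntil w hw).length + (p.dropUntil w hw).length = p.length := by
    rw [← SimpleGraph.Walk.length_append, SimpleGraph.Walk.take_spec]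
  have h4 : G.dist x y ≤ G.dist x w + G.dist w y := hc.dist_triangle
  rw [mem_gInterval]
  omega

lemma induce_dist (hc : G.Connected) {s : Set V} (hconv : GConvex G s) (a b : ↥s) :
    (G.induce s).dist a b = G.dist ↑a ↑b := by
  obtain ⟨p, hp⟩ := hc.exists_walk_length_eq_dist ↑a ↑b
  have hsup : ∀ w ∈ p.support, w ∈ s := fun w hw =>
    hconv ↑a a.2 ↑b b.2 (support_subset_interval hc p hp hw)
  obtain ⟨q, hq⟩ := walk_induce p hsup
  apply le_antisymm
  · calc (G.induce s).dist a b
        ≤ (q.copy (Subtype.coe_eta a _) (Subtype.coe_eta b _)).length := SimpleGraph.dist_le _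
      _ = p.length := by rw [SimpleGraph.Walk.length_copy, hq]
      _ = _ := hp
  · obtain ⟨r, hr⟩ := SimpleGraph.Reachable.exists_walk_length_eq_dist
      (⟨q.copy (Subtype.coe_eta a _) (Subtype.coe_eta b _)⟩ : (G.induce s).Reachable a b)
    have hle : G.dist ↑a ↑b ≤ (r.map (SimpleGraph.Embedding.induce s).toHom).length :=
      SimpleGraph.dist_le _
    rw [SimpleGraph.Walk.length_map, hr] at hle
    exact hle

end Induce

/-- If `H` is a minimal halfspace of a median graph `G` (the side of a hyperplane),
then the gate map `p'` onto `Hᶜ` restricts to an isomorphism of `H` onto `p'(H)`,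
`G` is isomorphic to `(G \ H) ∪ (p'(H) × {0,1})`, and `p'(H)` is a convex subgraph
(a cuboid) of `G \ H`. -/
theorem collapse_minimal_halfspace {V : Type} (G : SimpleGraph V)
    (hG : IsMedianGraph G) (H : Set V) (hH : IsHalfspace G H)
    (hmin : ∀ K : Set V, IsHalfspace G K → K ⊆ H → K = H)
    (p' : V → V) (hp' : ∀ x, IsGraphGate G Hᶜ x (p' x)) :
    (Set.InjOn p' H ∧ ∀ a ∈ H, ∀ b ∈ H, (G.Adj a b ↔ G.Adj (p' a) (p' b))) ∧
    Nonempty (G ≃g doubledGraph G H (p' '' H)) ∧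
    GConvex (G.induce Hᶜ) {x : ↥Hᶜ | (x : V) ∈ p' '' H} := by

  obtain ⟨hc, hmed⟩ := hG
  have hadj : ∀ x ∈ H, G.Adj x (p' x) := fun x hx =>
    SimpleGraph.dist_eq_one_iff_adj.mp (gate_dist_one hc hmed hmin hp' hx)
  have hdp : ∀ x ∈ H, ∀ y ∈ H, G.dist x y = G.dist (p' x) (p' y) := fun x hx y hy =>
    dist_pres hc hmed hH hmin hp' hx hy
  have hinj : Set.InjOn p' H := by
    intro x hx y hy he
    have hd := hdp x hx y hy
    rw [he, SimpleGraph.dist_self] at hd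
    exact (hc.dist_eq_zero_iff).mp hd
  have hiff : ∀ a ∈ H, ∀ b ∈ H, (G.Adj a b ↔ G.Adj (p' a) (p' b)) := by
    intro a ha b hb
    rw [← SimpleGraph.dist_eq_one_iff_adj, ← SimpleGraph.dist_eq_one_iff_adj, hdp a ha b hb]
  have hedge : ∀ a ∈ H, ∀ b ∈ Hᶜ, (G.Adj a b ↔ b = p' a) := by
    intro a ha b hb
    constructor
    · exact fun h => gate_edge hc hp' ha hb h
    · rintro rfl; exact hadj a ha
  refine ⟨⟨hinj, hiff⟩, ⟨?_⟩, ?_⟩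
  · -- the isomorphism
    classical
    refine ⟨⟨fun x => if h : x ∈ H then Sum.inr ⟨p' x, ⟨x, h, rfl⟩⟩ else Sum.inl ⟨x, h⟩,
        fun z => Sum.rec (fun a => ↑a) (fun q => q.2.choose) z, ?_, ?_⟩, ?_⟩
    · intro x
      by_cases h : x ∈ H
      · simp only [dif_pos h]
        have hsp := (⟨x, h, rfl⟩ : ∃ a, a ∈ H ∧ p' a = p' x).choose_spec
        exact hinj hsp.1 h hsp.2
      · simp only [dif_neg h]
    · intro z
      cases z with
      | inl a =>
        have ha : (a : V) ∉ H := a.2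
        simp only [dif_neg ha]
      | inr q =>
        have hsp := q.2.choose_spec
        simp only [dif_pos hsp.1]
        exact congrArg Sum.inr (Subtype.ext hsp.2)
    · intro a b
      simp only [Equiv.coe_fn_mk]
      by_cases ha : a ∈ H <;> by_cases hb : b ∈ H
      · -- both in H
        simp only [dif_pos ha, dif_pos hb, doubledGraph, SimpleGraph.fromRel_adj]
        constructor
        · rintro ⟨hne, h | h⟩
          · exact (hiff a ha b hb).mpr h
          · exact (hiff a ha b hb).mpr h.symm
        · intro h
          have h' := (hiff a ha b hb).mp h
          refine ⟨fun hcon => h'.ne (congrArg Subtype.val (Sum.inr_injective hcon)), Or.inl h'⟩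
      · -- a ∈ H, b ∉ H
        simp only [dif_pos ha, dif_neg hb, doubledGraph, SimpleGraph.fromRel_adj]
        constructor
        · rintro ⟨-, h | h⟩
          · exact absurd h (by simp)
          · exact (hedge a ha b hb).mpr h
        · intro h
          exact ⟨by simp, Or.inr ((hedge a ha b hb).mp h)⟩
      · -- a ∉ H, b ∈ H
        simp only [dif_neg ha, dif_pos hb, doubledGraph, SimpleGraph.fromRel_adj]
        constructor
        · rintro ⟨-, h | h⟩
          · exact ((hedge b hb a ha).mpr h).symm
          · exact absurd h (by simp)
        · intro h
          exact ⟨by simp, Or.inl ((hedge b hb a ha).mp h.symm)⟩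
      · -- neither
        simp only [dif_neg ha, dif_neg hb, doubledGraph, SimpleGraph.fromRel_adj]
        constructor
        · rintro ⟨-, h | h⟩
          · exact h
          · exact h.symm
        · intro h
          exact ⟨fun hcon => h.ne (congrArg Subtype.val (Sum.inl_injective hcon)), Or.inl h⟩
  · -- convexity of the image in the induced graph
    intro x hx y hy w hw
    simp only [Set.mem_setOf_eq] at hx hy ⊢
    obtain ⟨a, ha, hax⟩ := hx
    obtain ⟨b, hb, hby⟩ := hy
    have hcv : GConvex G Hᶜ := hH.2.2.2
    rw [mem_gInterval, induce_dist hc hcv, induce_dist hc hcv, induce_dist hc hcv] at hw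
    apply image_interval hc hmed hH hmin hp' ha hb w.2
    rw [mem_gInterval, hax, hby]
    exact hw
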